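/- If G and H are finite p-groups for the same prime p, with H acting faithfully on a finite set Ω, then the wreath product G ≀_Ω H has a surjective strategy. -/

import Mathlib

/-- One step of multiplication in the wreath product `G ≀ H` (base `Ω → G`,
with `H` acting on `Ω`): `(k,h)·(k',h') = (k·(h·k'), hh')`. -/
def wmul {G H Ω : Type*} [Group G] [Group H] [MulAction H Ω]
    (a b : (Ω → G) × H) : (Ω → G) × H :=
  (a.1 * fun ω => b.1 (a.2⁻¹ • ω), a.2 * b.2)

/-- `ks` is a surjective strategy for `G ≀ H`: for every adversarial sequence
`hs` of the same length, the projections to the base `K = Ω → G` of the partial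
products `id, (k₁,h₁), (k₁,h₁)(k₂,h₂), …` cover all of `K`. -/
def IsSurjStrat (G : Type*) [Group G] (H : Type*) [Group H] (Ω : Type*) [MulAction H Ω]
    (ks : List (Ω → G)) : Prop :=
  ∀ hs : List H, hs.length = ks.length →
    ∀ k : Ω → G, k ∈ (((ks.zip hs).scanl wmul 1).map Prod.fst)

/-- The puzzle `G ≀ H` (switches `G` at positions `Ω`, spun by `H`) has a
surjective strategy. -/
def HasSurjStrat (G : Type*) [Group G] (H : Type*) [Group H] (Ω : Type*) [MulAction H Ω] : Prop :=
  ∃ ks : List (Ω → G), IsSurjStrat G H Ω ks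

namespace SpinAux

open List

variable {K : Type*} {H : Type*} [Group K] [Group H]

variable {K : Type*} {H : Type*} [Group K] [Group H]

def stp (φ : H →* MulAut K) (a : K) (b : H) : K ⋊[φ] H := ⟨a, b⟩

@[simp] lemma stp_left (φ : H →* MulAut K) (a : K) (b : H) : (stp φ a b).left = a := rfl

@[simp] lemma stp_right (φ : H →* MulAut K) (a : K) (b : H) : (stp φ a b).right = b := rfl

def Fp (φ : H →* MulAut K) (ks : List K) (hs : List H) : K ⋊[φ] H :=
  (List.zipWith (stp φ) ks hs).prod

@[simp] lemma Fp_nil (φ : H →* MulAut K) (hs : List H) : Fp φ [] hs = 1 := rfl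

@[simp] lemma Fp_nil' (φ : H →* MulAut K) (ks : List K) : Fp φ ks [] = 1 := by
  simp [Fp]

lemma Fp_cons (φ : H →* MulAut K) (a : K) (b : H) (ks : List K) (hs : List H) :
    Fp φ (a :: ks) (b :: hs) = stp φ a b * Fp φ ks hs := by
  simp [Fp]

lemma Fp_append (φ : H →* MulAut K) {ks1 : List K} {hs1 : List H} (ks2 : List K) (hs2 : List H)
    (h : ks1.length = hs1.length) :
    Fp φ (ks1 ++ ks2) (hs1 ++ hs2) = Fp φ ks1 hs1 * Fp φ ks2 hs2 := by
  rw [Fp, List.zipWith_append h, List.prod_append]; rfl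

def Covers (φ : H →* MulAut K) (ks : List K) : Prop :=
  ∀ hs : List H, hs.length = ks.length → ∀ k : K,
    ∃ n, (Fp φ (ks.take n) (hs.take n)).left = k

def HasCov (φ : H →* MulAut K) : Prop := ∃ ks, Covers φ ks

lemma take_eq_take_min {α : Type*} (l : List α) (n : ℕ) :
    l.take n = l.take (min n l.length) := by
  rcases le_total n l.length with h | h
  · rw [min_eq_left h]
  · rw [min_eq_right h, List.take_of_length_le h, List.take_length]

lemma take_append_le {α : Type*} {l1 l2 : List α} {n : ℕ} (h : n ≤ l1.length) :
    (l1 ++ l2).take n = l1.take n := by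
  rw [List.take_append, Nat.sub_eq_zero_of_le h, List.take_zero,
    List.append_nil]

lemma take_append_cons {α : Type*} (l1 : List α) (a : α) (l2 : List α) (n : ℕ) :
    (l1 ++ a :: l2).take (l1.length + 1 + n) = l1 ++ a :: l2.take n := by
  rw [List.take_append, List.take_of_length_le (by omega),
    show l1.length + 1 + n - l1.length = n + 1 by omega, List.take_succ_cons]

lemma exists_prefix_cover (K' : Type*) [Group K'] [Finite K'] :
    ∃ bs : List K', ∀ t : K', ∃ n, (bs.take n).prod = t := by
  classical
  have aux : ∀ (xs : List K') (c : K'), ∃ ks : List K',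
      ∀ x ∈ xs, ∃ n, c * (ks.take n).prod = x := by
    intro xs
    induction xs with
    | nil => exact fun c => ⟨[], by simp⟩
    | cons x xs ih =>
      intro c
      obtain ⟨ks, hks⟩ := ih x
      refine ⟨(c⁻¹ * x) :: ks, ?_⟩
      intro y hy
      rcases List.mem_cons.mp hy with rfl | hy
      · exact ⟨1, by simp⟩
      · obtain ⟨n, hn⟩ := hks y hy
        exact ⟨n + 1, by simpa [mul_assoc] using hn⟩
  letI := Fintype.ofFinite K'
  obtain ⟨ks, hks⟩ := aux Finset.univ.toList 1
  exact ⟨ks, fun t => by simpa using hks t (by simp)⟩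

lemma left_mul_inr {φ : H →* MulAut K} (x : K ⋊[φ] H) (g : H) :
    (x * SemidirectProduct.inr g).left = x.left := by
  rw [SemidirectProduct.mul_left, SemidirectProduct.left_inr, map_one, mul_one]

/-- The combination step: if the `H`-action is trivial on a normal subgroup `N` and the
quotient has a surjective strategy, then so does `K`. -/
lemma combo [Finite K] (φ : H →* MulAut K) (N : Subgroup K) [N.Normal]
    (htriv : ∀ (h : H), ∀ x ∈ N, φ h x = x)
    (φQ : H →* MulAut (K ⧸ N))
    (hφQ : ∀ (h : H) (x : K), φQ h (QuotientGroup.mk x) = QuotientGroup.mk (φ h x))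
    (hQ : HasCov φQ) : HasCov φ := by
  classical
  obtain ⟨as, has⟩ := hQ
  obtain ⟨bs, hbs⟩ := exists_prefix_cover (↥N)
  set cs : List K := as.map Quotient.out with hcs
  have hcsmk : cs.map (QuotientGroup.mk : K → K ⧸ N) = as := by
    rw [hcs, List.map_map]
    exact (List.map_congr_left fun a _ => QuotientGroup.out_eq' a).trans (List.map_id as)
  set bsK : List K := bs.map (Subtype.val : ↥N → K) with hbsK
  have hblen : bsK.length = bs.length := by simp [hbsK]
  -- the left component of a block of `N`-moves lies in `N`
  have hmem : ∀ (bs' : List ↥N) (hs : List H),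
      (Fp φ (bs'.map (Subtype.val : ↥N → K)) hs).left ∈ N := by
    intro bs'
    induction bs' with
    | nil => intro hs; simpa using N.one_mem
    | cons b bs' ih =>
      intro hs
      cases hs with
      | nil => simpa using N.one_mem
      | cons e hs =>
        rw [List.map_cons, Fp_cons, SemidirectProduct.mul_left, stp_left, stp_right]
        refine N.mul_mem b.2 ?_
        rw [htriv e _ (ih hs)]
        exact ih hs
  -- the left component of a block of `N`-moves is the product of the moves
  have hprod : ∀ (bs' : List ↥N) (hs : List H), hs.length = bs'.length →
      (Fp φ (bs'.map (Subtype.val : ↥N → K)) hs).left = (bs'.prod : ↥N).val := by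
    intro bs'
    induction bs' with
    | nil => intro hs h; simp
    | cons b bs' ih =>
      intro hs h
      cases hs with
      | nil => simp at h
      | cons e hs =>
        rw [List.map_cons, Fp_cons, SemidirectProduct.mul_left, stp_left, stp_right,
          ih hs (by simpa using h), htriv e _ (bs'.prod).2, List.prod_cons]
        rfl
  -- a block of `N`-moves covers `k` whenever the current coset matches
  have block : ∀ (w : K ⋊[φ] H) (hs0 : List H), hs0.length = bsK.length →
      ∀ k : K, (QuotientGroup.mk w.left : K ⧸ N) = QuotientGroup.mk k →
      ∃ n ≤ bsK.length, (w * Fp φ (bsK.take n) (hs0.take n)).left = k := by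
    intro w hs0 hlen k hcl
    have hmemt : w.left⁻¹ * k ∈ N := QuotientGroup.eq.mp hcl
    obtain ⟨n₀, hn₀⟩ := hbs ⟨w.left⁻¹ * k, hmemt⟩
    refine ⟨min n₀ bs.length, by simp [hblen], ?_⟩
    have h1 : bsK.take (min n₀ bs.length) = (bs.take n₀).map (Subtype.val : ↥N → K) := by
      rw [hbsK, ← List.map_take, ← take_eq_take_min]
    rw [SemidirectProduct.mul_left, h1,
      hprod (bs.take n₀) _ (by simp only [List.length_take, hlen, hblen]; omega), hn₀,
      htriv _ _ hmemt, mul_inv_cancel_left]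
  -- the projection to the quotient wreath product
  let π : (K ⋊[φ] H) →* ((K ⧸ N) ⋊[φQ] H) :=
    SemidirectProduct.map (QuotientGroup.mk' N) (MonoidHom.id H)
      (by intro g; ext x; exact (hφQ g x).symm)
  have hπleft : ∀ w : K ⋊[φ] H, (π w).left = QuotientGroup.mk w.left := fun w => rfl
  have hπright : ∀ w : K ⋊[φ] H, (π w).right = w.right := fun w => rfl
  have hπstp : ∀ (c : K) (e : H), π (stp φ c e) = stp φQ (QuotientGroup.mk c) e := fun c e => rfl
  set L : List K → List K := fun cs' => cs'.flatMap (fun c => c :: bsK) with hL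
  -- main induction
  have claim : ∀ (cs' : List K) (k : K) (w : K ⋊[φ] H) (hs : List H),
      hs.length = (bsK ++ L cs').length →
      (∀ adv : List H, adv.length = cs'.length →
        ∃ m, (π w * SemidirectProduct.inr ((Fp φ bsK (hs.take bsK.length)).right) *
          Fp φQ ((cs'.map (QuotientGroup.mk : K → K ⧸ N)).take m) (adv.take m)).left
          = QuotientGroup.mk k) →
      ∃ n, (w * Fp φ ((bsK ++ L cs').take n) (hs.take n)).left = k := by
    intro cs'
    induction cs' with
    | nil =>
      intro k w hs hlen hcov
      obtain ⟨m, hm⟩ := hcov [] rfl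
      simp only [List.map_nil, List.take_nil, Fp_nil, mul_one] at hm
      rw [left_mul_inr, hπleft] at hm
      have hlen' : hs.length = bsK.length := by simpa [hL] using hlen
      obtain ⟨n, _, hn⟩ := block w hs hlen' k hm
      refine ⟨n, ?_⟩
      simpa [hL] using hn
    | cons c cs' ih =>
      intro k w hs hlen hcov
      have hLc : L (c :: cs') = c :: (bsK ++ L cs') := by simp [hL]
      set b := bsK.length with hb
      set hs0 := hs.take b with hhs0
      have hlenhs : b + 1 ≤ hs.length := by
        rw [hlen, hLc]; simp only [List.length_append, List.length_cons]; omega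
      have hlen0 : hs0.length = b := by
        rw [hhs0, List.length_take]; omega
      obtain ⟨e, hs', hdrop⟩ : ∃ e hs', hs.drop b = e :: hs' := by
        rcases hd : hs.drop b with _ | ⟨e, hs'⟩
        · exfalso; have := (List.length_drop : (hs.drop b).length = hs.length - b) ▸ congrArg List.length hd; simp at this; omega
        · exact ⟨e, hs', rfl⟩
      have hhs : hs = hs0 ++ e :: hs' := by
        rw [hhs0, ← hdrop, List.take_append_drop]
      have hlen' : hs'.length = (bsK ++ L cs').length := by
        have h1 := congrArg List.length hhs
        rw [hlen, hLc] at h1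
        simp only [List.length_append, List.length_cons, List.length_take] at h1 ⊢
        omega
      set B := Fp φ bsK hs0 with hB
      set q0 := B.right with hq0
      set q1 := (Fp φ bsK (hs'.take b)).right with hq1
      set w1 := w * B * stp φ c e with hw1
      have hπB : π B = SemidirectProduct.inr q0 := by
        have h1 : (π B).left = 1 := by
          rw [hπleft]
          exact (QuotientGroup.eq_one_iff _).mpr (hmem bs hs0)
        apply SemidirectProduct.ext
        · rw [h1, SemidirectProduct.left_inr]
        · rw [hπright, SemidirectProduct.right_inr]
      have hkey : π w * SemidirectProduct.inr q0 * stp φQ (QuotientGroup.mk c) (e * q1)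
          = π w1 * SemidirectProduct.inr q1 := by
        rw [hw1, map_mul, map_mul, hπB, hπstp]
        apply SemidirectProduct.ext
        · simp only [SemidirectProduct.mul_left, SemidirectProduct.mul_right,
            SemidirectProduct.left_inr, SemidirectProduct.right_inr, stp_left, stp_right,
            map_one, map_mul, mul_one, MulAut.mul_apply]
        · simp only [SemidirectProduct.mul_right, SemidirectProduct.right_inr, stp_right,
            mul_assoc]
      by_cases hnow : (π w).left = (QuotientGroup.mk k : K ⧸ N)
      · rw [hπleft] at hnow
        obtain ⟨n, hnle, hn⟩ := block w hs0 (by rw [hlen0]) k hnow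
        refine ⟨n, ?_⟩
        rw [hLc, take_append_le (show n ≤ bsK.length by omega), hhs,
          take_append_le (show n ≤ hs0.length by omega)]
        exact hn
      · have hcov' : ∀ adv' : List H, adv'.length = cs'.length →
            ∃ m, (π w1 * SemidirectProduct.inr ((Fp φ bsK (hs'.take bsK.length)).right) *
              Fp φQ ((cs'.map (QuotientGroup.mk : K → K ⧸ N)).take m) (adv'.take m)).left
              = QuotientGroup.mk k := by
          intro adv' hadv'
          obtain ⟨m, hm⟩ := hcov ((e * q1) :: adv') (by simpa using hadv')
          cases m with
          | zero =>
            exfalso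
            apply hnow
            simp only [List.take_zero, Fp_nil, mul_one] at hm
            rw [left_mul_inr] at hm
            exact hm
          | succ j =>
            refine ⟨j, ?_⟩
            rw [List.map_cons, List.take_succ_cons, List.take_succ_cons, Fp_cons,
              ← mul_assoc, hkey] at hm
            rw [mul_assoc] at hm ⊢
            exact hm
        obtain ⟨n', hn'⟩ := ih k w1 hs' hlen' hcov'
        · refine ⟨b + 1 + n', ?_⟩
          have e1 : (bsK ++ L (c :: cs')).take (b + 1 + n')
              = bsK ++ c :: ((bsK ++ L cs').take n') := by
            rw [hLc, hb]; exact take_append_cons bsK c _ n'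
          have e2 : hs.take (b + 1 + n') = hs0 ++ e :: (hs'.take n') := by
            rw [hhs]
            have := take_append_cons hs0 e hs' n'
            rwa [hlen0] at this
          rw [e1, e2, Fp_append φ _ _ (by rw [hlen0]), Fp_cons, ← mul_assoc, ← mul_assoc,
            ← hB, ← hw1]
          exact hn'
  -- conclude
  refine ⟨bsK ++ L cs, ?_⟩
  intro hs hlen k
  have hcovtop : ∀ adv : List H, adv.length = cs.length →
      ∃ m, (π 1 * SemidirectProduct.inr ((Fp φ bsK (hs.take bsK.length)).right) *
        Fp φQ ((cs.map (QuotientGroup.mk : K → K ⧸ N)).take m) (adv.take m)).left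
        = QuotientGroup.mk k := by
    intro adv hadv
    set q0 := (Fp φ bsK (hs.take bsK.length)).right with hq0
    obtain ⟨m, hm⟩ := has adv (by rw [hadv, hcs]; simp) ((φQ q0⁻¹) (QuotientGroup.mk k))
    refine ⟨m, ?_⟩
    rw [← hcsmk] at hm
    rw [map_one, one_mul, SemidirectProduct.mul_left, SemidirectProduct.left_inr,
      SemidirectProduct.right_inr, one_mul, hm, ← MulAut.mul_apply, ← map_mul,
      mul_inv_cancel, map_one, MulAut.one_apply]
  obtain ⟨n, hn⟩ := claim cs k 1 hs hlen hcovtop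
  exact ⟨n, by simpa using hn⟩



/-- A p-group acting on a nontrivial finite p-group has a nontrivial central fixed point. -/
lemma exists_fixed_central (p : ℕ) [Fact p.Prime] [Finite K] [Nontrivial K]
    (hK : IsPGroup p K) (hH : IsPGroup p H) (φ : H →* MulAut K) :
    ∃ z : K, z ≠ 1 ∧ z ∈ Subgroup.center K ∧ ∀ h : H, φ h z = z := by
  classical
  set C := Subgroup.center K with hC
  have hCinv : ∀ (h : H), ∀ x ∈ C, φ h x ∈ C := by
    intro h x hx
    rw [hC, Subgroup.mem_center_iff] at hx ⊢
    intro g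
    have hg : φ h ((φ h)⁻¹ g) = g := by
      rw [← MulAut.mul_apply, mul_inv_cancel, MulAut.one_apply]
    calc g * φ h x = φ h ((φ h)⁻¹ g * x) := by rw [map_mul, hg]
    _ = φ h (x * (φ h)⁻¹ g) := by rw [hx]
    _ = φ h x * g := by rw [map_mul, hg]
  letI : SMul H ↥C := ⟨fun h z => ⟨φ h z, hCinv h z z.2⟩⟩
  have hsmul : ∀ (h : H) (z : ↥C), ((h • z : ↥C) : K) = φ h z := fun h z => rfl
  letI : MulAction H ↥C :=
    { one_smul := fun z => Subtype.ext (by rw [hsmul]; simp)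
      mul_smul := fun g h z => Subtype.ext (by rw [hsmul, hsmul, hsmul, map_mul,
        MulAut.mul_apply]) }
  have h1fix : (1 : ↥C) ∈ MulAction.fixedPoints H ↥C := by
    intro h
    exact Subtype.ext (by rw [hsmul]; simp)
  have hnt : Nontrivial ↥C := hK.center_nontrivial
  have hCp : IsPGroup p ↥C := hK.to_subgroup C
  have hdvd : p ∣ Nat.card ↥C := by
    obtain ⟨n, hn⟩ := IsPGroup.iff_card.mp hCp
    have h1 : 1 < Nat.card ↥C := Finite.one_lt_card
    have hn0 : n ≠ 0 := by rintro rfl; rw [hn] at h1; simp at h1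
    rw [hn]
    exact dvd_pow_self p hn0
  obtain ⟨z, hzf, hzne⟩ := hH.exists_fixed_point_of_prime_dvd_card_of_fixed_point (↥C) hdvd h1fix
  refine ⟨(z : K), ?_, z.2, fun h => ?_⟩
  · intro h0
    exact hzne (Subtype.ext h0.symm)
  · have := hzf h
    rw [← hsmul h z, this]


universe u v

theorem mainA {H : Type v} [Group H] (p : ℕ) (hp : p.Prime) (hH : IsPGroup p H) :
    ∀ (n : ℕ) (K : Type u) [Group K] [Finite K], IsPGroup p K → Nat.card K ≤ n →
      ∀ φ : H →* MulAut K, HasCov φ := by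
  haveI : Fact p.Prime := ⟨hp⟩
  intro n
  induction n with
  | zero =>
    intro K _ _ _ hcard φ
    have := Nat.card_pos (α := K)
    omega
  | succ n ih =>
    intro K _ _ hK hcard φ
    rcases subsingleton_or_nontrivial K with hss | hnt
    · exact ⟨[], fun hs _ k => ⟨0, Subsingleton.elim _ _⟩⟩
    · obtain ⟨z, hz1, hzc, hzf⟩ := exists_fixed_central p hK hH φ
      set N : Subgroup K := Subgroup.zpowers z with hN
      have htriv : ∀ (h : H), ∀ x ∈ N, φ h x = x := by
        intro h x hx
        obtain ⟨m, rfl⟩ := Subgroup.mem_zpowers_iff.mp hx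
        rw [map_zpow, hzf]
      haveI : N.Normal := by
        constructor
        intro x hx g
        obtain ⟨m, rfl⟩ := Subgroup.mem_zpowers_iff.mp hx
        have hzcm : z ^ m ∈ Subgroup.center K := Subgroup.zpow_mem _ hzc m
        rw [Subgroup.mem_center_iff.mp hzcm g, mul_inv_cancel_right]
        exact Subgroup.zpow_mem _ (Subgroup.mem_zpowers z) m
      have hmapN : ∀ h : H, N.map (φ h : K ≃* K) = N := by
        intro h
        ext y
        simp only [Subgroup.mem_map]
        constructor
        · rintro ⟨x, hx, rfl⟩
          show φ h x ∈ N
          rw [htriv h x hx]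
          exact hx
        · intro hy
          exact ⟨y, hy, htriv h y hy⟩
      set φQ : H →* MulAut (K ⧸ N) := MonoidHom.mk'
        (fun h => QuotientGroup.congr N N (φ h) (hmapN h))
        (by
          intro a b
          apply MulEquiv.ext
          intro q
          refine QuotientGroup.induction_on q ?_
          intro x
          rw [MulAut.mul_apply, QuotientGroup.congr_mk, QuotientGroup.congr_mk,
            QuotientGroup.congr_mk, map_mul, MulAut.mul_apply]) with hφQdef
      have hφQ : ∀ (h : H) (x : K), φQ h (QuotientGroup.mk x) = QuotientGroup.mk (φ h x) := by
        intro h x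
        rw [hφQdef]
        exact QuotientGroup.congr_mk N N (φ h) (hmapN h) x
      have hcardN : 1 < Nat.card ↥N := by
        have : Nontrivial ↥N := ⟨⟨⟨z, Subgroup.mem_zpowers z⟩, 1, by
          intro hcontr
          exact hz1 (congrArg Subtype.val hcontr)⟩⟩
        exact Finite.one_lt_card
      have hcardQ : Nat.card (K ⧸ N) ≤ n := by
        have heq := Subgroup.card_eq_card_quotient_mul_card_subgroup N
        have hpos : 0 < Nat.card (K ⧸ N) := Nat.card_pos
        have h2 : Nat.card (K ⧸ N) * 2 ≤ Nat.card (K ⧸ N) * Nat.card ↥N :=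
          Nat.mul_le_mul_left _ hcardN
        rw [← heq] at h2
        omega
      exact combo φ N htriv φQ hφQ (ih (K ⧸ N) (hK.to_quotient N) hcardQ φQ)

/-- The permutation action of `H` on `Ω → G`. -/
def permAut (G : Type*) {H Ω : Type*} [Group G] [Group H] [MulAction H Ω] :
    H →* MulAut (Ω → G) :=
  MonoidHom.mk'
    (fun h =>
      { toFun := fun f ω => f (h⁻¹ • ω)
        invFun := fun f ω => f (h • ω)
        left_inv := fun f => funext fun ω => by simp
        right_inv := fun f => funext fun ω => by simp
        map_mul' := fun f g => rfl })
    (fun a b => by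
      apply MulEquiv.ext
      intro f
      funext ω
      show f ((a * b)⁻¹ • ω) = f (b⁻¹ • a⁻¹ • ω)
      rw [mul_inv_rev, mul_smul])

@[simp] lemma stp_one {K H : Type*} [Group K] [Group H] (φ : H →* MulAut K) :
    stp φ 1 1 = 1 := rfl

lemma isPGroup_pi (p : ℕ) [Fact p.Prime] (G Ω : Type*) [Group G] [Finite G] [Fintype Ω]
    (hG : IsPGroup p G) : IsPGroup p (Ω → G) := by
  classical
  rw [IsPGroup.iff_card]
  obtain ⟨m, hm⟩ := IsPGroup.iff_card.mp hG
  refine ⟨m * Fintype.card Ω, ?_⟩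
  rw [Nat.card_pi]
  simp only [hm, Finset.prod_const, Finset.card_univ]
  rw [pow_mul]

lemma foldl_take_mem_scanl {α β : Type*} (f : β → α → β) :
    ∀ (l : List α) (x : β) (n : ℕ), List.foldl f x (l.take n) ∈ List.scanl f x l := by
  intro l
  induction l with
  | nil =>
    intro x n
    simp
  | cons a l ih =>
    intro x n
    cases n with
    | zero => simp [List.scanl_cons]
    | succ n =>
      rw [List.take_succ_cons, List.foldl_cons, List.scanl_cons]
      exact List.mem_cons_of_mem _ (ih (f x a) n)

end SpinAux

namespace SpinAux

lemma wmul_foldl {G H Ω : Type*} [Group G] [Group H] [MulAction H Ω] :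
    ∀ (ks : List (Ω → G)) (hs : List H) (x : (Ω → G) × H),
      (List.foldl wmul x (ks.zip hs)).1
        = (stp (permAut G (H := H) (Ω := Ω)) x.1 x.2 * Fp (permAut G) ks hs).left := by
  intro ks
  induction ks with
  | nil =>
    intro hs x
    simp [SemidirectProduct.mul_left]
  | cons a ks ih =>
    intro hs x
    cases hs with
    | nil =>
      simp [SemidirectProduct.mul_left]
    | cons e hs =>
      rw [List.zip_cons_cons, List.foldl_cons, ih, Fp_cons, ← mul_assoc]
      have h1 : stp (permAut G (H := H) (Ω := Ω)) (wmul x (a, e)).1 (wmul x (a, e)).2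
          = stp (permAut G) x.1 x.2 * stp (permAut G) a e := rfl
      rw [h1]

end SpinAux

/-- if G and H are finite p-groups for the same prime p and H acts
faithfully on Ω, then G ≀_Ω H has a surjective strategy. -/
theorem stmt5 {G H Ω : Type*} [Group G] [Group H] [MulAction H Ω]
    [Fintype Ω] [Finite G] [Finite H] [FaithfulSMul H Ω]
    (p : ℕ) (hp : p.Prime) (hG : IsPGroup p G) (hH : IsPGroup p H) :
    HasSurjStrat G H Ω := by
  classical
  haveI : Fact p.Prime := ⟨hp⟩
  obtain ⟨ks, hks⟩ := SpinAux.mainA p hp hH (Nat.card (Ω → G)) (Ω → G)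
    (SpinAux.isPGroup_pi p G Ω hG) le_rfl (SpinAux.permAut G)
  refine ⟨ks, ?_⟩
  intro hs hlen k
  obtain ⟨n, hn⟩ := hks hs hlen k
  have hmem := SpinAux.foldl_take_mem_scanl wmul (ks.zip hs) 1 n
  have heq : (List.foldl wmul 1 ((ks.zip hs).take n)).1 = k := by
    have hz : (ks.zip hs).take n = (ks.take n).zip (hs.take n) := by
      rw [List.zip_eq_zipWith, List.zip_eq_zipWith, List.take_zipWith]
    rw [hz, SpinAux.wmul_foldl]
    simpa using hn
  exact heq ▸ List.mem_map_of_mem (f := Prod.fst) hmem
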